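/- arXiv:2103.06153 — 3 statements merged into one kernel-verified Lean document; each statement's English description precedes it below -/
import Mathlib

section
/- For any real vector x and real numbers w_{ji} with corresponding terms, the quadratic form identity/inequality: for nodes i, j, k, and any weight w_{j,i} < 0, w_{j,i}(x_j − x_i)² ≥ 2 w_{j,i}(x_k − x_j)² + 2 w_{j,i}(x_k − x_i)². Consequently, if graph G_B is obtained from G by deleting a negative edge (j,i) with weight w_{j,i} < 0 and adding 2 w_{j,i} to the weights of edges (k,j) and (k,i), then L − L_B is positive semi-definite. -/
/-- Combinatorial graph Laplacian of a weighted undirected graph on `Fin n`. -/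
noncomputable def graphLaplacian {n : ℕ} (w : Matrix (Fin n) (Fin n) ℝ) :
    Matrix (Fin n) (Fin n) ℝ :=
  Matrix.of fun i j => if i = j then ∑ k, w i k else - w i j

lemma pair_ne_of_left {α : Type*} {p q a b : α} (h1 : p ≠ a) (h2 : p ≠ b) :
    ({p, q} : Set α) ≠ {a, b} := by
  intro h
  have hp : p ∈ ({a, b} : Set α) := h ▸ Set.mem_insert _ _
  rcases hp with h' | h'
  · exact h1 h'
  · exact h2 h'

lemma pair_ne_of_right {α : Type*} {p q a b : α} (h1 : q ≠ a) (h2 : q ≠ b) :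
    ({p, q} : Set α) ≠ {a, b} := by
  intro h
  have hq : q ∈ ({a, b} : Set α) := h ▸ Set.mem_insert_of_mem _ rfl
  rcases hq with h' | h'
  · exact h1 h'
  · exact h2 h'

lemma pair_self_ne {α : Type*} {p a b : α} (h : a ≠ b) :
    ({p, p} : Set α) ≠ {a, b} := by
  intro hE
  apply h
  have ha : a ∈ ({p, p} : Set α) := by rw [hE]; exact Set.mem_insert _ _
  have hb : b ∈ ({p, p} : Set α) := by rw [hE]; exact Set.mem_insert_of_mem _ rfl
  simp only [Set.mem_insert_iff, Set.mem_singleton_iff, or_self] at ha hb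
  rw [ha, hb]

/-- Proposition 4(a): the scalar inequality
`w_{j,i}(x_j − x_i)² ≥ 2 w_{j,i}(x_k − x_j)² + 2 w_{j,i}(x_k − x_i)²` for `w_{j,i} < 0`,
and consequently removing a negative edge `(j,i)` while adding `2 w_{j,i}` to the
weights of edges `(k,j)` and `(k,i)` keeps `L − L_B` positive semi-definite. -/
theorem laplacian_sub_posSemidef_of_remove_negative_edge {n : ℕ}
    (w wB : Matrix (Fin n) (Fin n) ℝ)
    (hsymm : ∀ p q, w p q = w q p) (hdiag : ∀ p, w p p = 0)
    (i j k : Fin n) (hij : i ≠ j) (hik : i ≠ k) (hjk : j ≠ k)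
    (hneg : w j i < 0)
    (hji : wB j i = 0) (hij' : wB i j = 0)
    (hkj : wB k j = w k j + 2 * w j i) (hjk' : wB j k = w j k + 2 * w j i)
    (hki : wB k i = w k i + 2 * w j i) (hik' : wB i k = w i k + 2 * w j i)
    (hrest : ∀ p q : Fin n,
      ({p, q} : Set (Fin n)) ≠ {j, i} → ({p, q} : Set (Fin n)) ≠ {k, j} →
      ({p, q} : Set (Fin n)) ≠ {k, i} → wB p q = w p q) :
    (∀ x : Fin n → ℝ,
      2 * w j i * (x k - x j) ^ 2 + 2 * w j i * (x k - x i) ^ 2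
        ≤ w j i * (x j - x i) ^ 2) ∧
    (graphLaplacian w - graphLaplacian wB).PosSemidef := by
  constructor
  · intro x
    nlinarith [mul_nonneg (neg_nonneg.2 hneg.le) (sq_nonneg (2 * x k - x j - x i)),
      sq_nonneg (x j - x i)]
  -- the vector `v = e_j + e_i - 2 e_k`
  set v : Fin n → ℝ := fun p => if p = j then 1 else if p = i then 1 else if p = k then -2 else 0
    with hv_def
  have hvj : v j = 1 := by simp [hv_def]
  have hvi : v i = 1 := by simp [hv_def, hij]
  have hvk : v k = -2 := by simp [hv_def, Ne.symm hjk, Ne.symm hik]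
  have hvo : ∀ p, p ≠ i → p ≠ j → p ≠ k → v p = 0 := by
    intro p h1 h2 h3; simp [hv_def, h1, h2, h3]
  -- diagonal entries of `wB` agree with `w`
  have hBdiag : ∀ p, wB p p = w p p := fun p =>
    hrest p p (pair_self_ne (Ne.symm hij)) (pair_self_ne (Ne.symm hjk))
      (pair_self_ne (Ne.symm hik))
  -- off-diagonal difference
  have hd : ∀ p q, p ≠ q → w p q - wB p q = w j i * (v p * v q) := by
    intro p q hpq
    by_cases hp : p ≠ i ∧ p ≠ j ∧ p ≠ k
    · rw [hrest p q (pair_ne_of_left hp.2.1 hp.1) (pair_ne_of_left hp.2.2 hp.2.1)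
        (pair_ne_of_left hp.2.2 hp.1), hvo p hp.1 hp.2.1 hp.2.2]
      ring
    by_cases hq : q ≠ i ∧ q ≠ j ∧ q ≠ k
    · rw [hrest p q (pair_ne_of_right hq.2.1 hq.1) (pair_ne_of_right hq.2.2 hq.2.1)
        (pair_ne_of_right hq.2.2 hq.1), hvo q hq.1 hq.2.1 hq.2.2]
      ring
    simp only [not_and_or, not_not] at hp hq
    rcases hp with h1 | h1 | h1 <;> rcases hq with h2 | h2 | h2 <;> rw [h1, h2]
    · exact absurd (h1.trans h2.symm) hpq
    · rw [hij', hvi, hvj, hsymm i j]; ring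
    · rw [hik', hvi, hvk]; ring
    · rw [hji, hvi, hvj]; ring
    · exact absurd (h1.trans h2.symm) hpq
    · rw [hjk', hvj, hvk]; ring
    · rw [hki, hvi, hvk, hsymm k i]; ring
    · rw [hkj, hvj, hvk, hsymm k j]; ring
    · exact absurd (h1.trans h2.symm) hpq
  -- sum of v is zero
  have hvsum : ∑ r, v r = 0 := by
    rw [← Finset.sum_subset (Finset.subset_univ ({j, i, k} : Finset (Fin n)))
      (fun r _ hr => by
        simp only [Finset.mem_insert, Finset.mem_singleton, not_or] at hr
        exact hvo r hr.2.1 hr.1 hr.2.2)]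
    rw [Finset.sum_insert (by simp [Ne.symm hij, hjk]),
      Finset.sum_insert (by simp [hik]), Finset.sum_singleton, hvj, hvi, hvk]
    ring
  -- the matrix identity
  have hM : graphLaplacian w - graphLaplacian wB
      = (-(w j i)) • Matrix.vecMulVec v v := by
    ext p q
    simp only [Matrix.sub_apply, graphLaplacian, Matrix.of_apply, Matrix.smul_apply,
      Matrix.vecMulVec_apply, smul_eq_mul]
    by_cases h : p = q
    · subst h
      simp only [if_pos rfl]
      have key : ∀ r, w p r - wB p r
          = w j i * (v p * v r) - (if r = p then w j i * (v p * v p) else 0) := by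
        intro r
        by_cases hr : r = p
        · subst hr; rw [hdiag, hBdiag, hdiag]; simp
        · rw [hd p r (fun h => hr h.symm), if_neg hr, sub_zero]
      calc ∑ r, w p r - ∑ r, wB p r
          = ∑ r, (w p r - wB p r) := by rw [Finset.sum_sub_distrib]
        _ = ∑ r, (w j i * (v p * v r) - (if r = p then w j i * (v p * v p) else 0)) :=
            Finset.sum_congr rfl fun r _ => key r
        _ = (∑ r, w j i * (v p * v r)) - w j i * (v p * v p) := by
            rw [Finset.sum_sub_distrib, Finset.sum_ite_eq' Finset.univ p
              (fun _ => w j i * (v p * v p))]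
            simp
        _ = w j i * v p * (∑ r, v r) - w j i * (v p * v p) := by
            rw [Finset.mul_sum]; ring_nf
        _ = -(w j i) * (v p * v p) := by rw [hvsum]; ring
    · rw [if_neg h, if_neg h]
      have := hd p q h
      linarith [hd p q h, (by ring : -(w j i) * (v p * v q) = -(w j i * (v p * v q)))]
  rw [hM, Matrix.posSemidef_iff_dotProduct_mulVec]
  constructor
  · ext p q
    simp [Matrix.conjTranspose_apply, Matrix.vecMulVec_apply, mul_comm]
  · intro x
    have h1 : (Matrix.vecMulVec v v).mulVec x = (dotProduct v x) • v := by
      ext p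
      simp only [Matrix.mulVec, Matrix.vecMulVec_apply, dotProduct, Pi.smul_apply,
        smul_eq_mul]
      rw [Finset.sum_mul]
      apply Finset.sum_congr rfl
      intros; ring
    rw [Matrix.smul_mulVec, h1]
    have h2 : dotProduct (star x) (-w j i • (dotProduct v x) • v)
        = (-w j i) * ((dotProduct v x) * (dotProduct v x)) := by
      rw [star_trivial, dotProduct_smul, dotProduct_smul, smul_eq_mul,
        smul_eq_mul, dotProduct_comm]
    rw [h2]
    have := mul_self_nonneg (dotProduct v x)
    nlinarith [hneg]
end

section
/- Let M be a real symmetric matrix whose smallest eigenvalue λ_min(M) has an eigenvector v with all entries strictly positive. Let S = diag(1/v₁, …, 1/vₙ) and C = S M S⁻¹. Then every Gershgorin disc left-end of C is at least λ_min(M), i.e., for every row i, C(i,i) − Σ_{j≠i} |C(i,j)| ≥ λ_min(M) holds whenever all off-diagonal entries of M are nonpositive; moreover the row sums satisfy Σ_j C(i,j) = λ_min(M) for every i. -/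
/-- GDPA (single-color case): if the smallest eigenvalue of a symmetric `M` has a
strictly positive eigenvector `v`, then for `C = S M S⁻¹` with `S = diag(1/vᵢ)`
(i.e. `C i j = M i j * v j / v i`), every row sum of `C` equals `λ_min(M)`, and if
all off-diagonal entries of `M` are nonpositive, every Gershgorin disc left-end of
`C` is at least `λ_min(M)`. -/
theorem gdpa_positive_eigenvector {n : ℕ}
    (M : Matrix (Fin n) (Fin n) ℝ) (hM : M.IsHermitian)
    (v : Fin n → ℝ) (hv : ∀ i, 0 < v i)
    (heig : M.mulVec v = (⨅ i : Fin n, hM.eigenvalues i) • v)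
    (C : Matrix (Fin n) (Fin n) ℝ)
    (hC : ∀ i j, C i j = M i j * v j / v i) :
    (∀ i, ∑ j, C i j = ⨅ i' : Fin n, hM.eigenvalues i') ∧
    ((∀ i j, i ≠ j → M i j ≤ 0) →
      ∀ i, (⨅ i' : Fin n, hM.eigenvalues i') ≤
        C i i - ∑ j ∈ Finset.univ.erase i, |C i j|) := by
  set lam := ⨅ i' : Fin n, hM.eigenvalues i' with hlam
  have hrow : ∀ i, ∑ j, C i j = lam := by
    intro i
    have h1 : M.mulVec v i = lam * v i := by
      rw [heig]; simp [Pi.smul_apply, smul_eq_mul]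
    have h2 : ∑ j, C i j = (∑ j, M i j * v j) / v i := by
      rw [Finset.sum_div]
      exact Finset.sum_congr rfl fun j _ => hC i j
    rw [h2]
    have : (∑ j, M i j * v j) = M.mulVec v i := by
      simp [Matrix.mulVec, dotProduct]
    rw [this, h1, mul_div_assoc, div_self (hv i).ne', mul_one]
  refine ⟨hrow, fun hoff i => ?_⟩
  have key : ∑ j ∈ Finset.univ.erase i, |C i j|
      = -∑ j ∈ Finset.univ.erase i, C i j := by
    rw [← Finset.sum_neg_distrib]
    refine Finset.sum_congr rfl fun j hj => ?_
    have hji : j ≠ i := Finset.ne_of_mem_erase hj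
    have : C i j ≤ 0 := by
      rw [hC i j]
      exact div_nonpos_of_nonpos_of_nonneg
        (mul_nonpos_of_nonpos_of_nonneg (hoff i j (Ne.symm hji)) (hv j).le) (hv i).le
    exact abs_of_nonpos this
  have hsplit : ∑ j, C i j = C i i + ∑ j ∈ Finset.univ.erase i, C i j :=
    (Finset.add_sum_erase _ _ (Finset.mem_univ i)).symm
  have := hrow i
  rw [key]
  linarith
end

section
/- Let M be a real symmetric matrix and v a vector with all entries nonzero satisfying M v = λ v. Define C = S M S⁻¹ with S = diag(1/v₁,…,1/vₙ). Suppose for all i ≠ j the sign condition sign(M(i,j)) · sign(v_i) · sign(v_j) ≤ 0 holds (i.e., the signed graph is balanced with coloring given by the signs of v). Then for every row i, the Gershgorin disc left-end of C equals λ: C(i,i) − Σ_{j≠i} |C(i,j)| = λ. -/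
lemma sign_aux {x y z : ℝ} (hy : y ≠ 0) (hz : z ≠ 0)
    (h : Real.sign x * Real.sign y * Real.sign z ≤ 0) : x * z / y ≤ 0 := by
  rcases lt_trichotomy x 0 with hx | hx | hx
  · rcases hy.lt_or_gt with hy' | hy' <;> rcases hz.lt_or_gt with hz' | hz' <;>
      simp [Real.sign_of_pos, Real.sign_of_neg, hx, hy', hz'] at h ⊢ <;>
      first
        | (apply div_nonpos_of_nonpos_of_nonneg; nlinarith; linarith)
        | (apply div_nonpos_of_nonneg_of_nonpos; nlinarith; linarith)
        | nlinarith
  · simp [hx]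
  · rcases hy.lt_or_gt with hy' | hy' <;> rcases hz.lt_or_gt with hz' | hz' <;>
      simp [Real.sign_of_pos, Real.sign_of_neg, hx, hy', hz'] at h ⊢ <;>
      first
        | (apply div_nonpos_of_nonpos_of_nonneg; nlinarith; linarith)
        | (apply div_nonpos_of_nonneg_of_nonpos; nlinarith; linarith)
        | nlinarith

/-- GDPA theorem: if `M v = λ v` with all `v i ≠ 0`, and the balance sign condition
`sign(M i j) · sign(v i) · sign(v j) ≤ 0` holds for all `i ≠ j`, then for
`C = S M S⁻¹` with `S = diag(1/vᵢ)`, every Gershgorin disc left-end of `C`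
equals `λ`. -/
theorem gdpa_balanced {n : ℕ}
    (M : Matrix (Fin n) (Fin n) ℝ) (hM : M.IsHermitian)
    (v : Fin n → ℝ) (hv : ∀ i, v i ≠ 0) (lam : ℝ)
    (heig : M.mulVec v = lam • v)
    (hsign : ∀ i j, i ≠ j →
      Real.sign (M i j) * Real.sign (v i) * Real.sign (v j) ≤ 0)
    (C : Matrix (Fin n) (Fin n) ℝ)
    (hC : ∀ i j, C i j = M i j * v j / v i) :
    ∀ i, C i i - ∑ j ∈ Finset.univ.erase i, |C i j| = lam := by
  intro i
  have hneg : ∀ j ∈ Finset.univ.erase i, |C i j| = -C i j := by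
    intro j hj
    have hji : j ≠ i := Finset.ne_of_mem_erase hj
    have hle : C i j ≤ 0 := by
      rw [hC]
      exact sign_aux (hv i) (hv j) (hsign i j hji.symm)
    exact abs_of_nonpos hle
  rw [Finset.sum_congr rfl hneg, Finset.sum_neg_distrib]
  have hrow : C i i + ∑ j ∈ Finset.univ.erase i, C i j = lam := by
    rw [Finset.add_sum_erase _ _ (Finset.mem_univ i)]
    have := congrFun heig i
    simp only [Matrix.mulVec, dotProduct, Pi.smul_apply, smul_eq_mul] at this
    have hsum : ∑ j, C i j = (∑ j, M i j * v j) / v i := by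
      rw [Finset.sum_div]; exact Finset.sum_congr rfl fun j _ => hC i j
    rw [hsum, this, mul_div_assoc, div_self (hv i), mul_one]
  linarith
end
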